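/- Let P be a Frobenius toral poset with toral functional F_P. If B ∈ g(P) satisfies F_P([E_{p,p}, B]) = 0 for all p ∈ P, then E*_{p,q}(B) = 0 for every pair (p,q) such that E*_{p,q} is a summand of F_P. -/

import Mathlib

/-!
Common definitions: for a finite poset `P`, identified with `{1,…,n}` via a linear
extension, represented by a relation `le` on `Fin n`, the type-A Lie poset algebra
`gA le` is the Lie subalgebra of `sl(n, ℂ)` spanned by the matrix units `E p q`
for `p ≺ q` together with all trace-zero diagonal matrices (here realized as a
submodule of complex `n × n` matrices, which is closed under the commutator
bracket).  `gFull le` is the full Lie poset algebra `g(P)` (with all diagonal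
matrices).  `FS S` is the functional `F_S = ∑_{(p,q) ∈ S} E*_{p,q}`.
-/

namespace LiePosets

noncomputable section

open scoped BigOperators

/-- Complex `n × n` matrices. -/
abbrev M (n : ℕ) : Type := Matrix (Fin n) (Fin n) ℂ

/-- The strict relation `p ≺ q` attached to a poset relation `le`. -/
def Strict {n : ℕ} (le : Fin n → Fin n → Prop) (p q : Fin n) : Prop := le p q ∧ p ≠ q

/-- The type-A Lie poset algebra `g_A(P)`: trace-zero matrices supported on
relations of the poset (off-diagonal entries vanish off the strict relations). -/
def gA {n : ℕ} (le : Fin n → Fin n → Prop) : Submodule ℂ (M n) where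
  carrier := {A | Matrix.trace A = 0 ∧ ∀ p q : Fin n, p ≠ q → ¬ le p q → A p q = 0}
  add_mem' := by
    rintro A B ⟨hA, hA'⟩ ⟨hB, hB'⟩
    exact ⟨by simp [hA, hB], fun p q h1 h2 => by
      simp [Matrix.add_apply, hA' p q h1 h2, hB' p q h1 h2]⟩
  zero_mem' := ⟨by simp, fun p q _ _ => by simp⟩
  smul_mem' := by
    rintro c A ⟨hA, hA'⟩
    exact ⟨by simp [hA], fun p q h1 h2 => by
      simp [Matrix.smul_apply, hA' p q h1 h2]⟩

/-- The Lie poset algebra `g(P)` (all diagonal matrices allowed). -/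
def gFull {n : ℕ} (le : Fin n → Fin n → Prop) : Submodule ℂ (M n) where
  carrier := {A | ∀ p q : Fin n, p ≠ q → ¬ le p q → A p q = 0}
  add_mem' := by
    rintro A B hA hB p q h1 h2
    simp [Matrix.add_apply, hA p q h1 h2, hB p q h1 h2]
  zero_mem' := fun p q _ _ => by simp
  smul_mem' := by
    rintro c A hA p q h1 h2
    simp [Matrix.smul_apply, hA p q h1 h2]

/-- The functional `F_S = ∑_{(p,q) ∈ S} E*_{p,q}` reading off the sum of the
coefficients of the matrix entries indexed by `S`. -/
def FS {n : ℕ} (S : Finset (Fin n × Fin n)) : M n →ₗ[ℂ] ℂ where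
  toFun A := ∑ pq ∈ S, A pq.1 pq.2
  map_add' A B := by simp [Matrix.add_apply, Finset.sum_add_distrib]
  map_smul' c A := by simp [Matrix.smul_apply, Finset.mul_sum]

/-- `F` is a Frobenius functional on the Lie subalgebra (submodule) `g`:
the kernel of the Kirillov form `B_F(x, y) = F ⁅x, y⁆` on `g` is trivial. -/
def IsFrobeniusOn {n : ℕ} (g : Submodule ℂ (M n)) (F : M n →ₗ[ℂ] ℂ) : Prop :=
  ∀ x ∈ g, (∀ y ∈ g, F ⁅x, y⁆ = 0) → x = 0

/-- `H` is a principal element for `F` on `g`:  `B_F(H, ·) = F` on `g`. -/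
def IsPrincipal {n : ℕ} (g : Submodule ℂ (M n)) (F : M n →ₗ[ℂ] ℂ) (H : M n) : Prop :=
  H ∈ g ∧ ∀ y ∈ g, F ⁅H, y⁆ = F y

/-- The adjoint action `ad H = ⁅H, -⁆` as a linear endomorphism of matrices. -/
def adE {n : ℕ} (H : M n) : Module.End ℂ (M n) :=
  LinearMap.mulLeft ℂ H - LinearMap.mulRight ℂ H

/-- Multiplicity of `μ` as an eigenvalue of `ad H` acting on `g`. -/
def eigMult {n : ℕ} (g : Submodule ℂ (M n)) (H : M n) (μ : ℂ) : ℕ :=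
  Module.finrank ℂ ↥(g ⊓ Module.End.eigenspace (adE H) μ)

/-- `g` has a binary spectrum: for any Frobenius functional `F` and corresponding
principal element `H`, the multiset of eigenvalues of `ad H` on `g` consists of an
equal number of `0`'s and `1`'s. -/
def HasBinarySpectrum {n : ℕ} (g : Submodule ℂ (M n)) : Prop :=
  ∀ (F : M n →ₗ[ℂ] ℂ) (H : M n), IsFrobeniusOn g F → IsPrincipal g F H →
    eigMult g H 0 = eigMult g H 1 ∧
    eigMult g H 0 + eigMult g H 1 = Module.finrank ℂ ↥g

/-- The kernel of the Kirillov form `B_F` on `g`. -/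
def kirKer {n : ℕ} (g : Submodule ℂ (M n)) (F : M n →ₗ[ℂ] ℂ) : Submodule ℂ (M n) where
  carrier := {x | x ∈ g ∧ ∀ y ∈ g, F ⁅x, y⁆ = 0}
  zero_mem' := ⟨g.zero_mem, fun y _ => by rw [Ring.lie_def, zero_mul, mul_zero, sub_zero, map_zero]⟩
  add_mem' := by
    rintro a b ⟨ha, ha'⟩ ⟨hb, hb'⟩
    exact ⟨g.add_mem ha hb, fun y hy => by
      have h1 := ha' y hy
      have h2 := hb' y hy
      rw [Ring.lie_def] at h1 h2 ⊢
      rw [add_mul, mul_add, add_sub_add_comm, map_add, h1, h2, add_zero]⟩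
  smul_mem' := by
    rintro c a ⟨ha, ha'⟩
    exact ⟨g.smul_mem c ha, fun y hy => by
      have h1 := ha' y hy
      rw [Ring.lie_def] at h1 ⊢
      rw [smul_mul_assoc, mul_smul_comm, ← smul_sub, map_smul, h1, smul_zero]⟩

/-- The index of the Lie algebra `g`: the minimum over all functionals of the
dimension of the kernel of the corresponding Kirillov form. -/
def lieIndex {n : ℕ} (g : Submodule ℂ (M n)) : ℕ :=
  sInf {d : ℕ | ∃ F : M n →ₗ[ℂ] ℂ, d = Module.finrank ℂ ↥(kirKer g F)}

/-- The underlying undirected graph of the directed graph `Γ_{F_S}`. -/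
def gammaGraph {n : ℕ} (S : Finset (Fin n × Fin n)) : SimpleGraph (Fin n) where
  Adj p q := p ≠ q ∧ ((p, q) ∈ S ∨ (q, p) ∈ S)
  symm := ⟨fun p q h => ⟨h.1.symm, h.2.symm⟩⟩
  loopless := ⟨fun p h => h.1 rfl⟩

/-- `F_S` is small: `S` consists of strict relations of the poset and `Γ_{F_S}`
is a spanning tree of the comparability graph. -/
def Small {n : ℕ} (le : Fin n → Fin n → Prop) (S : Finset (Fin n × Fin n)) : Prop :=
  (∀ pq ∈ S, Strict le pq.1 pq.2) ∧ (gammaGraph S).IsTree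

/-- `U_{F_S}(P)`: the sinks of `Γ_{F_S}`. -/
def sinks {n : ℕ} (S : Finset (Fin n × Fin n)) : Set (Fin n) :=
  {p | (∃ q, (q, p) ∈ S) ∧ ∀ q, (p, q) ∉ S}

/-- `D_{F_S}(P)`: the sources of `Γ_{F_S}`. -/
def sources {n : ℕ} (S : Finset (Fin n × Fin n)) : Set (Fin n) :=
  {p | (∃ q, (p, q) ∈ S) ∧ ∀ q, (q, p) ∉ S}

/-- `B_{F_S}(P)`: the vertices of `Γ_{F_S}` that are neither sinks nor sources. -/
def betweens {n : ℕ} (S : Finset (Fin n × Fin n)) : Set (Fin n) :=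
  {p | (∃ q, (p, q) ∈ S) ∧ ∃ q, (q, p) ∈ S}

/-- `U` is a filter (up-closed set) of the poset. -/
def IsPosetFilter {n : ℕ} (le : Fin n → Fin n → Prop) (U : Set (Fin n)) : Prop :=
  ∀ p ∈ U, ∀ q, le p q → q ∈ U

/-- `D` is an order ideal (down-closed set) of the poset. -/
def IsPosetIdeal {n : ℕ} (le : Fin n → Fin n → Prop) (D : Set (Fin n)) : Prop :=
  ∀ p ∈ D, ∀ q, le q p → q ∈ D

/-- Helper to build elements of `Fin n` from natural numbers. -/
def fmk (n : ℕ) (h : 0 < n) (i : ℕ) : Fin n := ⟨i % n, Nat.mod_lt _ h⟩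

/-- Restriction of a matrix along an embedding of index types. -/
def restrictMat {N K : ℕ} (f : Fin K → Fin N) (B : M N) : M K :=
  Matrix.of fun p q => B (f p) (f q)

/-!
Toral posets: finite posets, toral-pairs, the gluing construction rules, and the
inductively defined toral functionals.
-/

/-- A finite poset on `Fin n`. -/
structure FinPoset where
  n : ℕ
  le : Fin n → Fin n → Prop
  le_refl : ∀ p, le p p
  le_antisymm : ∀ p q, le p q → le q p → p = q
  le_trans : ∀ p q r, le p q → le q r → le p r

/-- The strict order of a finite poset. -/
def FinPoset.strict (P : FinPoset) (p q : Fin P.n) : Prop := P.le p q ∧ p ≠ q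

def isMinimal (P : FinPoset) (p : Fin P.n) : Prop := ∀ q, P.le q p → q = p

def isMaximal (P : FinPoset) (p : Fin P.n) : Prop := ∀ q, P.le p q → q = p

/-- `Ext(P)`: the set of minimal and maximal elements of `P`. -/
def extSet (P : FinPoset) : Set (Fin P.n) := {p | isMinimal P p ∨ isMaximal P p}

/-- `Rel_E(P)`: the strict relations between elements of `Ext(P)`. -/
def relE (P : FinPoset) : Set (Fin P.n × Fin P.n) :=
  {pq | pq.1 ∈ extSet P ∧ pq.2 ∈ extSet P ∧ P.strict pq.1 pq.2}

/-- The geometric realization of the order complex `Σ(P)`: convex combinations of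
the standard basis vectors whose support is a chain of `P`. -/
def orderComplexSpace (P : FinPoset) : Set (Fin P.n → ℝ) :=
  {x | (∀ p, 0 ≤ x p) ∧ (∑ p, x p) = 1 ∧
    ∀ p q, x p ≠ 0 → x q ≠ 0 → P.le p q ∨ P.le q p}

/-- A toral-pair `(S, F_S)`: a Frobenius poset together with a Frobenius
functional satisfying (P1)–(P3) and (F1)–(F4).  The extremal elements are
`a, b, c` (with `b = c` in the case `|Ext| = 2`), ordered as `a ≼ b, c` or
`b, c ≼ a`. -/
structure ToralPair where
  P : FinPoset
  S : Finset (Fin P.n × Fin P.n)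
  a : Fin P.n
  b : Fin P.n
  c : Fin P.n
  ext_eq : extSet P = {a, b, c}
  ext_card : (b = c ∧ a ≠ b) ∨ (b ≠ c ∧ a ≠ b ∧ a ≠ c)
  ext_ord : (P.le a b ∧ P.le a c) ∨ (P.le b a ∧ P.le c a)
  S_rel : ∀ pq ∈ S, P.strict pq.1 pq.2
  frob : IsFrobeniusOn (gA P.le) (FS S)
  binary : HasBinarySpectrum (gA P.le)
  contractible : ContractibleSpace ↥(orderComplexSpace P)
  small : (gammaGraph S).IsTree
  filterU : IsPosetFilter P.le (sinks S)
  idealD : IsPosetIdeal P.le (sources S)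
  noB : betweens S = ∅
  gammaExt : ∀ p ∈ extSet P, ∀ q ∈ extSet P, P.strict p q → (p, q) ∈ S
  kerDiag : ∀ B ∈ gFull P.le, (∀ x ∈ gFull P.le, FS S ⁅x, B⁆ = 0) →
    (∀ p q, B p p = B q q) ∧ ∀ p q, p ≠ q → B p q = 0

/-- The twelve construction rules. -/
inductive Rule
  | A1 | A2 | B | C | D1 | D2 | E1 | E2 | F | G1 | G2 | H
deriving DecidableEq

/-- The extremal elements of the toral-pair poset identified by each rule. -/
def identSet (T : ToralPair) : Rule → Set (Fin T.P.n)
  | Rule.A1 => {T.b}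
  | Rule.A2 => {T.c}
  | Rule.C => {T.a}
  | Rule.B => {T.b, T.c}
  | Rule.D1 => {T.a, T.b}
  | Rule.E1 => {T.a, T.b}
  | Rule.D2 => {T.a, T.c}
  | Rule.E2 => {T.a, T.c}
  | _ => {T.a, T.b, T.c}

/-- Comparability in `Q` of two elements of `Q'` lying in the image of `Q`. -/
def cmpVia (Q Q' : FinPoset) (iota : Fin Q.n → Fin Q'.n) (v w : Fin Q'.n) : Prop :=
  ∃ p q, iota p = v ∧ iota q = w ∧ (Q.le p q ∨ Q.le q p)

/-- The side conditions of each construction rule: arity (three extremal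
elements where required) and the comparability/incomparability requirements in
`Q` of the identified elements. -/
def ruleCond (T : ToralPair) (Q Q' : FinPoset) (iota : Fin Q.n → Fin Q'.n)
    (kappa : Fin T.P.n → Fin Q'.n) : Rule → Prop
  | Rule.A1 => True
  | Rule.C => True
  | Rule.E1 => ¬ cmpVia Q Q' iota (kappa T.a) (kappa T.b)
  | Rule.A2 => T.b ≠ T.c
  | Rule.B => T.b ≠ T.c
  | Rule.D1 => T.b ≠ T.c ∧ cmpVia Q Q' iota (kappa T.a) (kappa T.b)
  | Rule.D2 => T.b ≠ T.c ∧ cmpVia Q Q' iota (kappa T.a) (kappa T.c)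
  | Rule.E2 => T.b ≠ T.c ∧ ¬ cmpVia Q Q' iota (kappa T.a) (kappa T.c)
  | Rule.F => T.b ≠ T.c ∧ cmpVia Q Q' iota (kappa T.a) (kappa T.b) ∧
      cmpVia Q Q' iota (kappa T.a) (kappa T.c)
  | Rule.G1 => T.b ≠ T.c ∧ cmpVia Q Q' iota (kappa T.a) (kappa T.b) ∧
      ¬ cmpVia Q Q' iota (kappa T.a) (kappa T.c)
  | Rule.G2 => T.b ≠ T.c ∧ ¬ cmpVia Q Q' iota (kappa T.a) (kappa T.b) ∧
      cmpVia Q Q' iota (kappa T.a) (kappa T.c)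
  | Rule.H => T.b ≠ T.c ∧ ¬ cmpVia Q Q' iota (kappa T.a) (kappa T.b) ∧
      ¬ cmpVia Q Q' iota (kappa T.a) (kappa T.c)

/-- Witness that `Q'` is formed from `Q` and the toral-pair poset `T.P` by
applying rule `r`: order embeddings of `Q` and `T.P` into `Q'` which jointly
cover `Q'`, induce all of its relations, overlap exactly in the identified
extremal elements (minimal with minimal, maximal with maximal), and satisfy the
side conditions of `r`. -/
structure Glue (T : ToralPair) (Q Q' : FinPoset) (r : Rule) where
  iota : Fin Q.n → Fin Q'.n
  kappa : Fin T.P.n → Fin Q'.n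
  iota_ord : ∀ p q, Q.le p q ↔ Q'.le (iota p) (iota q)
  kappa_ord : ∀ p q, T.P.le p q ↔ Q'.le (kappa p) (kappa q)
  cover : ∀ v, v ∈ Set.range iota ∪ Set.range kappa
  separated : ∀ v w, Q'.le v w →
    (v ∈ Set.range iota ∧ w ∈ Set.range iota) ∨
    (v ∈ Set.range kappa ∧ w ∈ Set.range kappa)
  overlap : Set.range iota ∩ Set.range kappa = kappa '' identSet T r
  ext_match : ∀ s ∈ identSet T r, ∀ p, iota p = kappa s →
    (isMinimal T.P s → isMinimal Q p) ∧ (isMaximal T.P s → isMaximal Q p)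
  cond : ruleCond T Q Q' iota kappa r

/-- `P` is a toral poset: it admits a construction sequence
`S₁ = Q₁ ⊂ Q₂ ⊂ ⋯ ⊂ Q_n = P` built from toral-pairs by the construction rules. -/
def IsToral (P : FinPoset) : Prop :=
  ∃ (m : ℕ) (T : Fin (m + 1) → ToralPair) (Q : Fin (m + 1) → FinPoset)
    (r : Fin (m + 1) → Rule),
    Q 0 = (T 0).P ∧ Q (Fin.last m) = P ∧
    ∀ i : Fin m, Nonempty (Glue (T i.succ) (Q i.castSucc) (Q i.succ) (r i.succ))

/-- The rules in `{A1, A2, C, D1, D2, F}`. -/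
def goodRule (r : Rule) : Prop :=
  r = Rule.A1 ∨ r = Rule.A2 ∨ r = Rule.C ∨ r = Rule.D1 ∨ r = Rule.D2 ∨ r = Rule.F

/-- `P` is a Frobenius, toral poset: toral, with a construction sequence using
only rules from `{A1, A2, C, D1, D2, F}`. -/
def IsFrobeniusToral (P : FinPoset) : Prop :=
  ∃ (m : ℕ) (T : Fin (m + 1) → ToralPair) (Q : Fin (m + 1) → FinPoset)
    (r : Fin (m + 1) → Rule),
    Q 0 = (T 0).P ∧ Q (Fin.last m) = P ∧
    (∀ i : Fin m, goodRule (r i.succ)) ∧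
    ∀ i : Fin m, Nonempty (Glue (T i.succ) (Q i.castSucc) (Q i.succ) (r i.succ))

/-- The toral-pair poset has a unique minimal element (`a ≼ b, c`). -/
def minCase (T : ToralPair) : Prop := T.P.le T.a T.b ∧ T.P.le T.a T.c

/-- The toral-pair poset has a unique maximal element (`b, c ≼ a`). -/
def maxCase (T : ToralPair) : Prop := T.P.le T.b T.a ∧ T.P.le T.c T.a

/-- The summands removed from `F_{Q_{i-1}} + F_{S_i}` in the definition of the
toral functional, according to the rule used. -/
def removedSet (T : ToralPair) {N : ℕ} (kappa : Fin T.P.n → Fin N) :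
    Rule → Set (Fin N × Fin N)
  | Rule.D1 => {pq | (minCase T ∧ pq = (kappa T.a, kappa T.b)) ∨
      (maxCase T ∧ pq = (kappa T.b, kappa T.a))}
  | Rule.D2 => {pq | (minCase T ∧ pq = (kappa T.a, kappa T.c)) ∨
      (maxCase T ∧ pq = (kappa T.c, kappa T.a))}
  | Rule.F => {pq | (minCase T ∧ (pq = (kappa T.a, kappa T.b) ∨ pq = (kappa T.a, kappa T.c))) ∨
      (maxCase T ∧ (pq = (kappa T.b, kappa T.a) ∨ pq = (kappa T.c, kappa T.a)))}
  | _ => ∅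

/-- Pushforward of a set of pairs along a map of index types. -/
def pairMap {N K : ℕ} (f : Fin N → Fin K) (s : Finset (Fin N × Fin N)) :
    Finset (Fin K × Fin K) :=
  s.image fun pq => (f pq.1, f pq.2)

/-- One step of the inductive definition of the toral functional:
`F_{Q_i} = F_{Q_{i-1}} + F_{S_i}` minus the removed summands, expressed on the
defining index sets. -/
def ToralFunStep (T : ToralPair) (Q Q' : FinPoset) (r : Rule) (g : Glue T Q Q' r)
    (s : Finset (Fin Q.n × Fin Q.n)) (s' : Finset (Fin Q'.n × Fin Q'.n)) : Prop :=
  (↑s' : Set (Fin Q'.n × Fin Q'.n)) =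
    ((↑(pairMap g.iota s) : Set (Fin Q'.n × Fin Q'.n)) ∪ ↑(pairMap g.kappa T.S)) \
      removedSet T g.kappa r

/-! ### Auxiliary machinery: cut potentials -/

/-- A *cut potential* for the edge `e` of the edge set `S`: a vertex potential
whose difference along each edge of `S` is the indicator of `e`. -/
def CutPot {n : ℕ} (S : Finset (Fin n × Fin n)) (e : Fin n × Fin n)
    (φ : Fin n → ℂ) : Prop :=
  ∀ g ∈ S, φ g.2 - φ g.1 = if g = e then 1 else 0

/-- Every edge of an acyclic (loop-free, antiparallel-free) edge set admits a
cut potential, by indicating one side of the bridge. -/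
lemma exists_cutPot_of_acyclic {n : ℕ} (S : Finset (Fin n × Fin n))
    (h1 : ∀ g ∈ S, g.1 ≠ g.2) (h2 : ∀ g ∈ S, (g.2, g.1) ∉ S)
    (hac : (gammaGraph S).IsAcyclic) :
    ∀ e ∈ S, ∃ φ : Fin n → ℂ, CutPot S e φ := by
  classical
  intro e he
  have hadj : (gammaGraph S).Adj e.1 e.2 := ⟨h1 e he, Or.inl (by simpa using he)⟩
  have hbr := (SimpleGraph.isAcyclic_iff_forall_adj_isBridge.mp hac) hadj
  rw [SimpleGraph.isBridge_iff] at hbr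
  set G' := gammaGraph S \ SimpleGraph.fromEdgeSet {s(e.1, e.2)} with hG'
  refine ⟨fun v => if G'.Reachable e.2 v then 1 else 0, ?_⟩
  intro g hg
  by_cases hge : g = e
  · subst hge
    have hr2 : G'.Reachable g.2 g.2 := SimpleGraph.Reachable.refl _
    have hr1 : ¬ G'.Reachable g.2 g.1 := fun h => hbr h.symm
    simp [hr2, hr1]
  · have hedge : s(g.1, g.2) ≠ s(e.1, e.2) := by
      intro h
      rw [Sym2.eq_iff] at h
      rcases h with ⟨ha, hb⟩ | ⟨ha, hb⟩
      · exact hge (Prod.ext ha hb)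
      · exact h2 e he (by rw [← ha, ← hb]; exact hg)
    have hadjg : G'.Adj g.1 g.2 := by
      rw [hG', SimpleGraph.sdiff_adj]
      refine ⟨⟨h1 g hg, Or.inl (by simpa using hg)⟩, ?_⟩
      rw [SimpleGraph.fromEdgeSet_adj]
      intro hcon
      exact hedge (by simpa using hcon.1)
    have hiff : G'.Reachable e.2 g.1 ↔ G'.Reachable e.2 g.2 :=
      ⟨fun h => h.trans hadjg.reachable, fun h => h.trans hadjg.symm.reachable⟩
    by_cases hrch : G'.Reachable e.2 g.1
    · simp [hrch, hiff.mp hrch, hge]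
    · have hrch2 : ¬ G'.Reachable e.2 g.2 := fun h => hrch (hiff.mpr h)
      simp [hrch, hrch2, hge]

section ToralPairFacts

variable (T : ToralPair)

lemma tp_ab : T.a ≠ T.b := by
  rcases T.ext_card with ⟨_, h⟩ | ⟨_, h, _⟩ <;> exact h

lemma tp_ac : T.a ≠ T.c := by
  rcases T.ext_card with ⟨h1, h2⟩ | ⟨_, _, h⟩
  · rw [← h1]; exact h2
  · exact h

lemma tp_memA : T.a ∈ extSet T.P := by rw [T.ext_eq]; simp
lemma tp_memB : T.b ∈ extSet T.P := by rw [T.ext_eq]; simp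
lemma tp_memC : T.c ∈ extSet T.P := by rw [T.ext_eq]; simp

lemma tp_minmax : minCase T ∨ maxCase T := T.ext_ord

lemma tp_not_both (hmin : minCase T) (hmax : maxCase T) : False :=
  tp_ab T (T.P.le_antisymm _ _ hmin.1 hmax.1)

lemma sab_min (h : minCase T) : (T.a, T.b) ∈ T.S :=
  T.gammaExt T.a (tp_memA T) T.b (tp_memB T) ⟨h.1, tp_ab T⟩

lemma sac_min (h : minCase T) : (T.a, T.c) ∈ T.S :=
  T.gammaExt T.a (tp_memA T) T.c (tp_memC T) ⟨h.2, tp_ac T⟩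

lemma sba_max (h : maxCase T) : (T.b, T.a) ∈ T.S :=
  T.gammaExt T.b (tp_memB T) T.a (tp_memA T) ⟨h.1, (tp_ab T).symm⟩

lemma sca_max (h : maxCase T) : (T.c, T.a) ∈ T.S :=
  T.gammaExt T.c (tp_memC T) T.a (tp_memA T) ⟨h.2, (tp_ac T).symm⟩

lemma tp_strict_ne {g : Fin T.P.n × Fin T.P.n} (hg : g ∈ T.S) : g.1 ≠ g.2 :=
  (T.S_rel g hg).2

lemma tp_no_antiparallel {g : Fin T.P.n × Fin T.P.n} (hg : g ∈ T.S)
    (hg' : (g.2, g.1) ∈ T.S) : False :=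
  (T.S_rel g hg).2 (T.P.le_antisymm _ _ (T.S_rel g hg).1 (T.S_rel _ hg').1)

/-- Cut potentials exist for the edges of a toral pair. -/
lemma tp_cutPot : ∀ f ∈ T.S, ∃ ψ : Fin T.P.n → ℂ, CutPot T.S f ψ :=
  exists_cutPot_of_acyclic T.S (fun g hg => tp_strict_ne T hg)
    (fun g hg hg' => absurd hg' (fun h => tp_no_antiparallel T hg h))
    T.small.IsAcyclic

lemma tp_b_max (hmin : minCase T) : isMaximal T.P T.b := by
  have hbe : T.b ∈ extSet T.P := tp_memB T
  rcases hbe with hm | hM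
  · exact absurd (hm T.a hmin.1) (tp_ab T)
  · exact hM

lemma tp_c_max (hmin : minCase T) : isMaximal T.P T.c := by
  have hce : T.c ∈ extSet T.P := tp_memC T
  rcases hce with hm | hM
  · exact absurd (hm T.a hmin.2) (tp_ac T)
  · exact hM

lemma tp_b_min (hmax : maxCase T) : isMinimal T.P T.b := by
  have hbe : T.b ∈ extSet T.P := tp_memB T
  rcases hbe with hm | hM
  · exact hm
  · exact absurd (hM T.a hmax.1) (tp_ab T)

lemma tp_c_min (hmax : maxCase T) : isMinimal T.P T.c := by
  have hce : T.c ∈ extSet T.P := tp_memC T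
  rcases hce with hm | hM
  · exact hm
  · exact absurd (hM T.a hmax.2) (tp_ac T)

lemma no_bc_min (hbc : T.b ≠ T.c) (h : minCase T) : (T.b, T.c) ∉ T.S := by
  intro hs
  exact hbc ((tp_b_max T h) T.c (T.S_rel _ hs).1).symm

lemma no_cb_min (hbc : T.b ≠ T.c) (h : minCase T) : (T.c, T.b) ∉ T.S := by
  intro hs
  exact hbc ((tp_c_max T h) T.b (T.S_rel _ hs).1)

lemma no_bc_max (hbc : T.b ≠ T.c) (h : maxCase T) : (T.b, T.c) ∉ T.S := by
  intro hs
  exact hbc ((tp_c_min T h) T.b (T.S_rel _ hs).1)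

lemma no_cb_max (hbc : T.b ≠ T.c) (h : maxCase T) : (T.c, T.b) ∉ T.S := by
  intro hs
  exact hbc ((tp_b_min T h) T.c (T.S_rel _ hs).1).symm

end ToralPairFacts

/-- The anchor of the identified set of each rule. -/
def anchor (T : ToralPair) : Rule → Fin T.P.n
  | Rule.A1 => T.b
  | Rule.A2 => T.c
  | _ => T.a

lemma anchor_mem_ident (T : ToralPair) (r : Rule) (hr : goodRule r) :
    anchor T r ∈ identSet T r := by
  rcases hr with h | h | h | h | h | h <;> subst h <;> simp [anchor, identSet]

section RemovedMembership

variable {N : ℕ} (T : ToralPair) (κ : Fin T.P.n → Fin N)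

lemma remD1_min (h : minCase T) :
    ((κ T.a, κ T.b) : Fin N × Fin N) ∈ removedSet T κ Rule.D1 := Or.inl ⟨h, rfl⟩

lemma remD1_max (h : maxCase T) :
    ((κ T.b, κ T.a) : Fin N × Fin N) ∈ removedSet T κ Rule.D1 := Or.inr ⟨h, rfl⟩

lemma remD2_min (h : minCase T) :
    ((κ T.a, κ T.c) : Fin N × Fin N) ∈ removedSet T κ Rule.D2 := Or.inl ⟨h, rfl⟩

lemma remD2_max (h : maxCase T) :
    ((κ T.c, κ T.a) : Fin N × Fin N) ∈ removedSet T κ Rule.D2 := Or.inr ⟨h, rfl⟩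

lemma remF_min_b (h : minCase T) :
    ((κ T.a, κ T.b) : Fin N × Fin N) ∈ removedSet T κ Rule.F :=
  Or.inl ⟨h, Or.inl rfl⟩

lemma remF_min_c (h : minCase T) :
    ((κ T.a, κ T.c) : Fin N × Fin N) ∈ removedSet T κ Rule.F :=
  Or.inl ⟨h, Or.inr rfl⟩

lemma remF_max_b (h : maxCase T) :
    ((κ T.b, κ T.a) : Fin N × Fin N) ∈ removedSet T κ Rule.F :=
  Or.inr ⟨h, Or.inl rfl⟩

lemma remF_max_c (h : maxCase T) :
    ((κ T.c, κ T.a) : Fin N × Fin N) ∈ removedSet T κ Rule.F :=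
  Or.inr ⟨h, Or.inr rfl⟩

end RemovedMembership

/-- A cut potential is flat along edges distinct from its own edge. -/
lemma cut_flat_ne (T : ToralPair) {f : Fin T.P.n × Fin T.P.n}
    {ψ : Fin T.P.n → ℂ} (hψ : CutPot T.S f ψ)
    {g : Fin T.P.n × Fin T.P.n} (hg : g ∈ T.S) (hne : g ≠ f) : ψ g.2 = ψ g.1 := by
  have := hψ g hg
  rw [if_neg hne] at this
  exact sub_eq_zero.mp this

/-- A cut potential of a non-removed edge is flat along removed edges. -/
lemma cut_flat_removed {N : ℕ} (T : ToralPair) (κ : Fin T.P.n → Fin N)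
    (r : Rule) {f : Fin T.P.n × Fin T.P.n}
    (hfr : (κ f.1, κ f.2) ∉ removedSet T κ r)
    {ψ : Fin T.P.n → ℂ} (hψ : CutPot T.S f ψ) (x y : Fin T.P.n)
    (hxy : (x, y) ∈ T.S)
    (hrem : ((κ x, κ y) : Fin N × Fin N) ∈ removedSet T κ r) : ψ y = ψ x :=
  cut_flat_ne T hψ hxy (fun h => hfr (by rw [← h]; exact hrem))

/-- Every edge of `T.S` between identified elements is a removed edge
(for the good rules). -/
lemma rule_removed {N : ℕ} (T : ToralPair) (κ : Fin T.P.n → Fin N) (r : Rule)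
    (hr : goodRule r) (hbc : r = Rule.F → T.b ≠ T.c) :
    ∀ g ∈ T.S, g.1 ∈ identSet T r → g.2 ∈ identSet T r →
      (κ g.1, κ g.2) ∈ removedSet T κ r := by
  intro g hg hg1 hg2
  have hne : g.1 ≠ g.2 := tp_strict_ne T hg
  have hle : T.P.le g.1 g.2 := (T.S_rel g hg).1
  rcases hr with h | h | h | h | h | h <;> subst h
  · -- A1
    simp only [identSet, Set.mem_singleton_iff] at hg1 hg2
    exact absurd (hg1.trans hg2.symm) hne
  · -- A2
    simp only [identSet, Set.mem_singleton_iff] at hg1 hg2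
    exact absurd (hg1.trans hg2.symm) hne
  · -- C
    simp only [identSet, Set.mem_singleton_iff] at hg1 hg2
    exact absurd (hg1.trans hg2.symm) hne
  · -- D1
    simp only [identSet, Set.mem_insert_iff, Set.mem_singleton_iff] at hg1 hg2
    rcases tp_minmax T with hmin | hmax
    · rcases hg1 with h1 | h1 <;> rcases hg2 with h2 | h2
      · exact absurd (h1.trans h2.symm) hne
      · rw [h1, h2]; exact remD1_min T κ hmin
      · exact absurd (T.P.le_antisymm _ _ hmin.1 (h1 ▸ h2 ▸ hle)) (tp_ab T)
      · exact absurd (h1.trans h2.symm) hne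
    · rcases hg1 with h1 | h1 <;> rcases hg2 with h2 | h2
      · exact absurd (h1.trans h2.symm) hne
      · exact absurd (T.P.le_antisymm _ _ (h1 ▸ h2 ▸ hle) hmax.1) (tp_ab T)
      · rw [h1, h2]; exact remD1_max T κ hmax
      · exact absurd (h1.trans h2.symm) hne
  · -- D2
    simp only [identSet, Set.mem_insert_iff, Set.mem_singleton_iff] at hg1 hg2
    rcases tp_minmax T with hmin | hmax
    · rcases hg1 with h1 | h1 <;> rcases hg2 with h2 | h2
      · exact absurd (h1.trans h2.symm) hne
      · rw [h1, h2]; exact remD2_min T κ hmin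
      · exact absurd (T.P.le_antisymm _ _ hmin.2 (h1 ▸ h2 ▸ hle)) (tp_ac T)
      · exact absurd (h1.trans h2.symm) hne
    · rcases hg1 with h1 | h1 <;> rcases hg2 with h2 | h2
      · exact absurd (h1.trans h2.symm) hne
      · exact absurd (T.P.le_antisymm _ _ (h1 ▸ h2 ▸ hle) hmax.2) (tp_ac T)
      · rw [h1, h2]; exact remD2_max T κ hmax
      · exact absurd (h1.trans h2.symm) hne
  · -- F
    have hbc' : T.b ≠ T.c := hbc rfl
    simp only [identSet, Set.mem_insert_iff, Set.mem_singleton_iff] at hg1 hg2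
    rcases tp_minmax T with hmin | hmax
    · rcases hg1 with h1 | h1 | h1 <;> rcases hg2 with h2 | h2 | h2
      · exact absurd (h1.trans h2.symm) hne
      · rw [h1, h2]; exact remF_min_b T κ hmin
      · rw [h1, h2]; exact remF_min_c T κ hmin
      · exact absurd (T.P.le_antisymm _ _ hmin.1 (h1 ▸ h2 ▸ hle)) (tp_ab T)
      · exact absurd (h1.trans h2.symm) hne
      · exact absurd (show (T.b, T.c) ∈ T.S from by rw [← h1, ← h2]; exact hg)
          (no_bc_min T hbc' hmin)
      · exact absurd (T.P.le_antisymm _ _ hmin.2 (h1 ▸ h2 ▸ hle)) (tp_ac T)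
      · exact absurd (show (T.c, T.b) ∈ T.S from by rw [← h1, ← h2]; exact hg)
          (no_cb_min T hbc' hmin)
      · exact absurd (h1.trans h2.symm) hne
    · rcases hg1 with h1 | h1 | h1 <;> rcases hg2 with h2 | h2 | h2
      · exact absurd (h1.trans h2.symm) hne
      · exact absurd (T.P.le_antisymm _ _ (h1 ▸ h2 ▸ hle) hmax.1) (tp_ab T)
      · exact absurd (T.P.le_antisymm _ _ (h1 ▸ h2 ▸ hle) hmax.2) (tp_ac T)
      · rw [h1, h2]; exact remF_max_b T κ hmax
      · exact absurd (h1.trans h2.symm) hne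
      · exact absurd (show (T.b, T.c) ∈ T.S from by rw [← h1, ← h2]; exact hg)
          (no_bc_max T hbc' hmax)
      · rw [h1, h2]; exact remF_max_c T κ hmax
      · exact absurd (show (T.c, T.b) ∈ T.S from by rw [← h1, ← h2]; exact hg)
          (no_cb_max T hbc' hmax)
      · exact absurd (h1.trans h2.symm) hne

/-- A cut potential of a non-removed edge is constant on the identified set. -/
lemma rule_const {N : ℕ} (T : ToralPair) (κ : Fin T.P.n → Fin N) (r : Rule)
    (hr : goodRule r) (f : Fin T.P.n × Fin T.P.n) (hf : f ∈ T.S)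
    (hfr : (κ f.1, κ f.2) ∉ removedSet T κ r)
    (ψ : Fin T.P.n → ℂ) (hψ : CutPot T.S f ψ) :
    ∀ s ∈ identSet T r, ψ s = ψ (anchor T r) := by
  intro s hs
  rcases hr with h | h | h | h | h | h <;> subst h
  · simp only [identSet, Set.mem_singleton_iff] at hs; rw [hs]; rfl
  · simp only [identSet, Set.mem_singleton_iff] at hs; rw [hs]; rfl
  · simp only [identSet, Set.mem_singleton_iff] at hs; rw [hs]; rfl
  · -- D1 : anchor = a, ident = {a, b}
    simp only [identSet, Set.mem_insert_iff, Set.mem_singleton_iff] at hs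
    rcases hs with hs | hs <;> rw [hs]
    · rfl
    · rcases tp_minmax T with hmin | hmax
      · exact cut_flat_removed T κ Rule.D1 hfr hψ T.a T.b (sab_min T hmin)
          (remD1_min T κ hmin)
      · exact (cut_flat_removed T κ Rule.D1 hfr hψ T.b T.a (sba_max T hmax)
          (remD1_max T κ hmax)).symm
  · -- D2 : anchor = a, ident = {a, c}
    simp only [identSet, Set.mem_insert_iff, Set.mem_singleton_iff] at hs
    rcases hs with hs | hs <;> rw [hs]
    · rfl
    · rcases tp_minmax T with hmin | hmax
      · exact cut_flat_removed T κ Rule.D2 hfr hψ T.a T.c (sac_min T hmin)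
          (remD2_min T κ hmin)
      · exact (cut_flat_removed T κ Rule.D2 hfr hψ T.c T.a (sca_max T hmax)
          (remD2_max T κ hmax)).symm
  · -- F : anchor = a, ident = {a, b, c}
    simp only [identSet, Set.mem_insert_iff, Set.mem_singleton_iff] at hs
    rcases hs with hs | hs | hs <;> rw [hs]
    · rfl
    · rcases tp_minmax T with hmin | hmax
      · exact cut_flat_removed T κ Rule.F hfr hψ T.a T.b (sab_min T hmin)
          (remF_min_b T κ hmin)
      · exact (cut_flat_removed T κ Rule.F hfr hψ T.b T.a (sba_max T hmax)
          (remF_max_b T κ hmax)).symm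
    · rcases tp_minmax T with hmin | hmax
      · exact cut_flat_removed T κ Rule.F hfr hψ T.a T.c (sac_min T hmin)
          (remF_min_c T κ hmin)
      · exact (cut_flat_removed T κ Rule.F hfr hψ T.c T.a (sca_max T hmax)
          (remF_max_c T κ hmax)).symm

/-- Given arbitrary prescribed values on the identified set, there is a function
flat along the non-removed edges of `T.S` matching those values. -/
lemma rule_theta {N : ℕ} (T : ToralPair) (κ : Fin T.P.n → Fin N) (r : Rule)
    (hr : goodRule r) (hbc : r = Rule.F → T.b ≠ T.c) (vals : Fin T.P.n → ℂ) :
    ∃ θ : Fin T.P.n → ℂ,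
      (∀ g ∈ T.S, (κ g.1, κ g.2) ∉ removedSet T κ r → θ g.2 = θ g.1) ∧
      (∀ s ∈ identSet T r, θ s = vals s) := by
  rcases hr with h | h | h | h | h | h <;> subst h
  · exact ⟨fun _ => vals T.b, fun g _ _ => rfl, by
      intro s hs
      simp only [identSet, Set.mem_singleton_iff] at hs
      rw [hs]⟩
  · exact ⟨fun _ => vals T.c, fun g _ _ => rfl, by
      intro s hs
      simp only [identSet, Set.mem_singleton_iff] at hs
      rw [hs]⟩
  · exact ⟨fun _ => vals T.a, fun g _ _ => rfl, by
      intro s hs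
      simp only [identSet, Set.mem_singleton_iff] at hs
      rw [hs]⟩
  · -- D1
    rcases tp_minmax T with hmin | hmax
    · obtain ⟨ψ, hψ⟩ := tp_cutPot T (T.a, T.b) (sab_min T hmin)
      refine ⟨fun t => vals T.a + (vals T.b - vals T.a) * (ψ t - ψ T.a), ?_, ?_⟩
      · intro g hg hgr
        beta_reduce
        rw [cut_flat_ne T hψ hg (fun h => hgr (by rw [h]; exact remD1_min T κ hmin))]
      · intro s hs
        simp only [identSet, Set.mem_insert_iff, Set.mem_singleton_iff] at hs
        have h1 : ψ T.b - ψ T.a = 1 := by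
          simpa using hψ (T.a, T.b) (sab_min T hmin)
        rcases hs with hs | hs <;> subst hs <;> beta_reduce
        · ring
        · linear_combination (vals T.b - vals T.a) * h1
    · obtain ⟨ψ, hψ⟩ := tp_cutPot T (T.b, T.a) (sba_max T hmax)
      refine ⟨fun t => vals T.a + (vals T.b - vals T.a) * (ψ T.a - ψ t), ?_, ?_⟩
      · intro g hg hgr
        beta_reduce
        rw [cut_flat_ne T hψ hg (fun h => hgr (by rw [h]; exact remD1_max T κ hmax))]
      · intro s hs
        simp only [identSet, Set.mem_insert_iff, Set.mem_singleton_iff] at hs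
        have h1 : ψ T.a - ψ T.b = 1 := by
          simpa using hψ (T.b, T.a) (sba_max T hmax)
        rcases hs with hs | hs <;> subst hs <;> beta_reduce
        · ring
        · linear_combination (vals T.b - vals T.a) * h1
  · -- D2
    rcases tp_minmax T with hmin | hmax
    · obtain ⟨ψ, hψ⟩ := tp_cutPot T (T.a, T.c) (sac_min T hmin)
      refine ⟨fun t => vals T.a + (vals T.c - vals T.a) * (ψ t - ψ T.a), ?_, ?_⟩
      · intro g hg hgr
        beta_reduce
        rw [cut_flat_ne T hψ hg (fun h => hgr (by rw [h]; exact remD2_min T κ hmin))]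
      · intro s hs
        simp only [identSet, Set.mem_insert_iff, Set.mem_singleton_iff] at hs
        have h1 : ψ T.c - ψ T.a = 1 := by
          simpa using hψ (T.a, T.c) (sac_min T hmin)
        rcases hs with hs | hs <;> subst hs <;> beta_reduce
        · ring
        · linear_combination (vals T.c - vals T.a) * h1
    · obtain ⟨ψ, hψ⟩ := tp_cutPot T (T.c, T.a) (sca_max T hmax)
      refine ⟨fun t => vals T.a + (vals T.c - vals T.a) * (ψ T.a - ψ t), ?_, ?_⟩
      · intro g hg hgr
        beta_reduce
        rw [cut_flat_ne T hψ hg (fun h => hgr (by rw [h]; exact remD2_max T κ hmax))]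
      · intro s hs
        simp only [identSet, Set.mem_insert_iff, Set.mem_singleton_iff] at hs
        have h1 : ψ T.a - ψ T.c = 1 := by
          simpa using hψ (T.c, T.a) (sca_max T hmax)
        rcases hs with hs | hs <;> subst hs <;> beta_reduce
        · ring
        · linear_combination (vals T.c - vals T.a) * h1
  · -- F
    have hbc' : T.b ≠ T.c := hbc rfl
    rcases tp_minmax T with hmin | hmax
    · obtain ⟨ψ1, hψ1⟩ := tp_cutPot T (T.a, T.b) (sab_min T hmin)
      obtain ⟨ψ2, hψ2⟩ := tp_cutPot T (T.a, T.c) (sac_min T hmin)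
      refine ⟨fun t => vals T.a + (vals T.b - vals T.a) * (ψ1 t - ψ1 T.a)
        + (vals T.c - vals T.a) * (ψ2 t - ψ2 T.a), ?_, ?_⟩
      · intro g hg hgr
        beta_reduce
        rw [cut_flat_ne T hψ1 hg (fun h => hgr (by rw [h]; exact remF_min_b T κ hmin)),
          cut_flat_ne T hψ2 hg (fun h => hgr (by rw [h]; exact remF_min_c T κ hmin))]
      · intro s hs
        simp only [identSet, Set.mem_insert_iff, Set.mem_singleton_iff] at hs
        have h1 : ψ1 T.b - ψ1 T.a = 1 := by
          simpa using hψ1 (T.a, T.b) (sab_min T hmin)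
        have h2 : ψ2 T.b - ψ2 T.a = 0 := by
          simpa [hbc'] using hψ2 (T.a, T.b) (sab_min T hmin)
        have h3 : ψ1 T.c - ψ1 T.a = 0 := by
          simpa [hbc', Ne.symm hbc'] using hψ1 (T.a, T.c) (sac_min T hmin)
        have h4 : ψ2 T.c - ψ2 T.a = 1 := by
          simpa using hψ2 (T.a, T.c) (sac_min T hmin)
        rcases hs with hs | hs | hs <;> subst hs <;> beta_reduce
        · ring
        · linear_combination (vals T.b - vals T.a) * h1 + (vals T.c - vals T.a) * h2
        · linear_combination (vals T.b - vals T.a) * h3 + (vals T.c - vals T.a) * h4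
    · obtain ⟨ψ1, hψ1⟩ := tp_cutPot T (T.b, T.a) (sba_max T hmax)
      obtain ⟨ψ2, hψ2⟩ := tp_cutPot T (T.c, T.a) (sca_max T hmax)
      refine ⟨fun t => vals T.a + (vals T.b - vals T.a) * (ψ1 T.a - ψ1 t)
        + (vals T.c - vals T.a) * (ψ2 T.a - ψ2 t), ?_, ?_⟩
      · intro g hg hgr
        beta_reduce
        rw [cut_flat_ne T hψ1 hg (fun h => hgr (by rw [h]; exact remF_max_b T κ hmax)),
          cut_flat_ne T hψ2 hg (fun h => hgr (by rw [h]; exact remF_max_c T κ hmax))]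
      · intro s hs
        simp only [identSet, Set.mem_insert_iff, Set.mem_singleton_iff] at hs
        have h1 : ψ1 T.a - ψ1 T.b = 1 := by
          simpa using hψ1 (T.b, T.a) (sba_max T hmax)
        have h2 : ψ2 T.a - ψ2 T.b = 0 := by
          simpa [hbc'] using hψ2 (T.b, T.a) (sba_max T hmax)
        have h3 : ψ1 T.a - ψ1 T.c = 0 := by
          simpa [hbc', Ne.symm hbc'] using hψ1 (T.c, T.a) (sca_max T hmax)
        have h4 : ψ2 T.a - ψ2 T.c = 1 := by
          simpa using hψ2 (T.c, T.a) (sca_max T hmax)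
        rcases hs with hs | hs | hs <;> subst hs <;> beta_reduce
        · ring
        · linear_combination (vals T.b - vals T.a) * h1 + (vals T.c - vals T.a) * h2
        · linear_combination (vals T.b - vals T.a) * h3 + (vals T.c - vals T.a) * h4

/-- An order embedding between finite posets is injective. -/
lemma ord_inj {Q Q' : FinPoset} (f : Fin Q.n → Fin Q'.n)
    (hf : ∀ p q, Q.le p q ↔ Q'.le (f p) (f q)) : Function.Injective f := by
  intro p q h
  apply Q.le_antisymm
  · exact (hf p q).mpr (h ▸ Q'.le_refl (f p))
  · exact (hf q p).mpr (h ▸ Q'.le_refl (f p))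

/-- Key step: cut potentials are preserved by the gluing construction. -/
lemma step_cutPot (T : ToralPair) (Q Q' : FinPoset) (r : Rule) (hr : goodRule r)
    (g : Glue T Q Q' r) (s : Finset (Fin Q.n × Fin Q.n))
    (s' : Finset (Fin Q'.n × Fin Q'.n))
    (hst : ToralFunStep T Q Q' r g s s')
    (IH : ∀ e ∈ s, ∃ φ : Fin Q.n → ℂ, CutPot s e φ) :
    ∀ e' ∈ s', ∃ φ' : Fin Q'.n → ℂ, CutPot s' e' φ' := by
  classical
  have hι : Function.Injective g.iota := ord_inj _ g.iota_ord
  have hκ : Function.Injective g.kappa := ord_inj _ g.kappa_ord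
  have hbc : r = Rule.F → T.b ≠ T.c := by
    intro hF
    subst hF
    exact g.cond.1
  have hmem : ∀ x : Fin Q'.n × Fin Q'.n, x ∈ s' ↔
      ((x ∈ pairMap g.iota s ∨ x ∈ pairMap g.kappa T.S) ∧
        x ∉ removedSet T g.kappa r) := by
    intro x
    have h := Set.ext_iff.mp hst x
    simpa [Set.mem_diff, Set.mem_union] using h
  have hshared : ∀ t, g.kappa t ∈ Set.range g.iota ↔ t ∈ identSet T r := by
    intro t
    constructor
    · intro ht
      have h2 : g.kappa t ∈ Set.range g.iota ∩ Set.range g.kappa :=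
        ⟨ht, ⟨t, rfl⟩⟩
      rw [g.overlap] at h2
      obtain ⟨u, hu, huk⟩ := h2
      rwa [← hκ huk]
    · intro ht
      have h2 : g.kappa t ∈ g.kappa '' identSet T r := ⟨t, ht, rfl⟩
      rw [← g.overlap] at h2
      exact h2.1
  have hcov : ∀ v : Fin Q'.n, v ∉ Set.range g.iota → ∃ t, g.kappa t = v := by
    intro v hv
    rcases g.cover v with h | h
    · exact absurd h hv
    · exact h
  intro e' he'
  obtain ⟨hcase, hnr⟩ := (hmem e').mp he'
  rcases hcase with hA | hB
  · -- e' comes from the iota part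
    obtain ⟨e, he, heq⟩ := Finset.mem_image.mp hA
    obtain ⟨φ, hφ⟩ := IH e he
    set vals : Fin T.P.n → ℂ :=
      fun t => if h : g.kappa t ∈ Set.range g.iota then φ h.choose else 0 with hvals
    obtain ⟨θ, hθflat, hθmatch⟩ := rule_theta T g.kappa r hr hbc vals
    set φ' : Fin Q'.n → ℂ := fun v =>
      if h : v ∈ Set.range g.iota then φ h.choose
      else θ (Classical.choose (hcov v h)) with hφ'
    have hvalι : ∀ p, φ' (g.iota p) = φ p := by
      intro p
      have h : g.iota p ∈ Set.range g.iota := ⟨p, rfl⟩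
      rw [hφ']
      dsimp only
      rw [dif_pos h]
      exact congrArg φ (hι h.choose_spec)
    have hvalκ : ∀ t, φ' (g.kappa t) = θ t := by
      intro t
      by_cases h : g.kappa t ∈ Set.range g.iota
      · rw [hφ']
        dsimp only
        rw [dif_pos h]
        have hid : t ∈ identSet T r := (hshared t).mp h
        have hm := hθmatch t hid
        rw [hm, hvals]
        dsimp only
        rw [dif_pos h]
      · rw [hφ']
        dsimp only
        rw [dif_neg h]
        exact congrArg θ (hκ (Classical.choose_spec (hcov _ h)))
    refine ⟨φ', ?_⟩
    intro g' hg'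
    obtain ⟨hc2, hnr2⟩ := (hmem g').mp hg'
    rcases hc2 with hι2 | hκ2
    · obtain ⟨f, hf, hfe⟩ := Finset.mem_image.mp hι2
      rw [← hfe, ← heq]
      dsimp only
      rw [hvalι, hvalι]
      rw [hφ f hf]
      by_cases hfeq : f = e
      · subst hfeq
        rw [if_pos rfl, if_pos rfl]
      · rw [if_neg hfeq, if_neg]
        intro h
        apply hfeq
        have h1 : g.iota f.1 = g.iota e.1 := congrArg Prod.fst h
        have h2 : g.iota f.2 = g.iota e.2 := congrArg Prod.snd h
        exact Prod.ext (hι h1) (hι h2)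
    · obtain ⟨u, hu, hue⟩ := Finset.mem_image.mp hκ2
      have hnru : (g.kappa u.1, g.kappa u.2) ∉ removedSet T g.kappa r := by
        rw [hue]; exact hnr2
      have hflat := hθflat u hu hnru
      rw [← hue]
      dsimp only
      rw [hvalκ, hvalκ, hflat, sub_self]
      rw [if_neg]
      intro h
      have h1 : g.kappa u.1 ∈ Set.range g.iota := by
        have := congrArg Prod.fst h
        simp only at this
        rw [this, ← heq]
        exact ⟨e.1, rfl⟩
      have h2 : g.kappa u.2 ∈ Set.range g.iota := by
        have := congrArg Prod.snd h
        simp only at this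
        rw [this, ← heq]
        exact ⟨e.2, rfl⟩
      exact hnru (rule_removed T g.kappa r hr hbc u hu
        ((hshared u.1).mp h1) ((hshared u.2).mp h2))
  · -- e' comes from the kappa part
    obtain ⟨f, hf, hfe⟩ := Finset.mem_image.mp hB
    have hfnr : (g.kappa f.1, g.kappa f.2) ∉ removedSet T g.kappa r := by
      rw [hfe]; exact hnr
    obtain ⟨ψ, hψ⟩ := tp_cutPot T f hf
    have hconst := rule_const T g.kappa r hr f hf hfnr ψ hψ
    set φ' : Fin Q'.n → ℂ := fun v =>
      if h : v ∈ Set.range g.kappa then ψ h.choose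
      else ψ (anchor T r) with hφ'
    have hvalκ : ∀ t, φ' (g.kappa t) = ψ t := by
      intro t
      have h : g.kappa t ∈ Set.range g.kappa := ⟨t, rfl⟩
      rw [hφ']
      dsimp only
      rw [dif_pos h]
      exact congrArg ψ (hκ h.choose_spec)
    have hvalι : ∀ p, φ' (g.iota p) = ψ (anchor T r) := by
      intro p
      by_cases h : g.iota p ∈ Set.range g.kappa
      · rw [hφ']
        dsimp only
        rw [dif_pos h]
        have h2 : g.iota p ∈ Set.range g.iota ∩ Set.range g.kappa :=
          ⟨⟨p, rfl⟩, h⟩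
        rw [g.overlap] at h2
        obtain ⟨u, hu, huk⟩ := h2
        have : h.choose = u := hκ (h.choose_spec.trans huk.symm)
        rw [this]
        exact hconst u hu
      · rw [hφ']
        dsimp only
        rw [dif_neg h]
    refine ⟨φ', ?_⟩
    intro g' hg'
    obtain ⟨hc2, hnr2⟩ := (hmem g').mp hg'
    rcases hc2 with hι2 | hκ2
    · obtain ⟨p, hp, hpe⟩ := Finset.mem_image.mp hι2
      rw [← hpe]
      dsimp only
      rw [hvalι, hvalι, sub_self]
      rw [if_neg]
      intro h
      rw [← hfe] at h
      have h1 : g.kappa f.1 ∈ Set.range g.iota := by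
        have := congrArg Prod.fst h
        simp only at this
        exact ⟨p.1, this⟩
      have h2 : g.kappa f.2 ∈ Set.range g.iota := by
        have := congrArg Prod.snd h
        simp only at this
        exact ⟨p.2, this⟩
      exact hfnr (rule_removed T g.kappa r hr hbc f hf
        ((hshared f.1).mp h1) ((hshared f.2).mp h2))
    · obtain ⟨u, hu, hue⟩ := Finset.mem_image.mp hκ2
      rw [← hue, ← hfe]
      dsimp only
      rw [hvalκ, hvalκ]
      rw [hψ u hu]
      by_cases hueq : u = f
      · subst hueq
        rw [if_pos rfl, if_pos rfl]
      · rw [if_neg hueq, if_neg]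
        intro h
        apply hueq
        have h1 : g.kappa u.1 = g.kappa f.1 := congrArg Prod.fst h
        have h2 : g.kappa u.2 = g.kappa f.2 := congrArg Prod.snd h
        exact Prod.ext (hκ h1) (hκ h2)

/-- Transport of the cut-potential property along an equality of posets. -/
lemma transport_cutPot (P₁ P₂ : FinPoset) (h : P₁ = P₂)
    (S₁ : Finset (Fin P₁.n × Fin P₁.n)) (S₂ : Finset (Fin P₂.n × Fin P₂.n))
    (hS : HEq S₁ S₂)
    (h2 : ∀ e ∈ S₂, ∃ φ : Fin P₂.n → ℂ, CutPot S₂ e φ) :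
    ∀ e ∈ S₁, ∃ φ : Fin P₁.n → ℂ, CutPot S₁ e φ := by
  subst h
  have := eq_of_heq hS
  subst this
  exact h2

/-- for a Frobenius toral poset `P = Q_n` with toral functional
`F_P`, if `B ∈ g(P)` satisfies `F_P(⁅E_{p,p}, B⁆) = 0` for all `p ∈ P`, then
`E*_{p,q}(B) = 0` for every summand `E*_{p,q}` of `F_P`. -/
theorem toral_functional_summands_vanish
    (m : ℕ) (T : Fin (m + 1) → ToralPair)
    (Q : Fin (m + 1) → FinPoset) (r : Fin (m + 1) → Rule)
    (hgood : ∀ i : Fin m, goodRule (r i.succ))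
    (g : ∀ i : Fin m, Glue (T i.succ) (Q i.castSucc) (Q i.succ) (r i.succ))
    (h0 : Q 0 = (T 0).P)
    (SQ : ∀ i : Fin (m + 1), Finset (Fin (Q i).n × Fin (Q i).n))
    (hSQ0 : HEq (SQ 0) (T 0).S)
    (hstep : ∀ i : Fin m,
      ToralFunStep (T i.succ) (Q i.castSucc) (Q i.succ) (r i.succ) (g i)
        (SQ i.castSucc) (SQ i.succ)) :
    ∀ B ∈ gFull (Q (Fin.last m)).le,
      (∀ p : Fin (Q (Fin.last m)).n,
        FS (SQ (Fin.last m)) ⁅Matrix.single p p (1 : ℂ), B⁆ = 0) →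
      ∀ pq ∈ SQ (Fin.last m), B pq.1 pq.2 = 0 := by
  classical
  have key : ∀ i : Fin (m + 1), ∀ e ∈ SQ i,
      ∃ φ : Fin (Q i).n → ℂ, CutPot (SQ i) e φ := by
    intro i
    induction i using Fin.induction with
    | zero =>
      exact transport_cutPot (Q 0) (T 0).P h0 (SQ 0) (T 0).S hSQ0
        (tp_cutPot (T 0))
    | succ i ih =>
      exact step_cutPot (T i.succ) (Q i.castSucc) (Q i.succ) (r i.succ)
        (hgood i) (g i) (SQ i.castSucc) (SQ i.succ) (hstep i) ih
  intro B _ hdiag e he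
  obtain ⟨φ, hφ⟩ := key (Fin.last m) e he
  -- compute the divergence conditions explicitly
  have hdiv : ∀ p : Fin (Q (Fin.last m)).n,
      ∑ q ∈ SQ (Fin.last m), ((if q.1 = p then B p q.2 else 0) -
        (if q.2 = p then B q.1 p else 0)) = 0 := by
    intro p
    have h := hdiag p
    have hFS : FS (SQ (Fin.last m)) ⁅Matrix.single p p (1 : ℂ), B⁆ =
        ∑ q ∈ SQ (Fin.last m), (⁅Matrix.single p p (1 : ℂ), B⁆ : M (Q (Fin.last m)).n) q.1 q.2 := rfl
    rw [hFS] at h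
    have hq : ∀ q ∈ SQ (Fin.last m),
        ((if q.1 = p then B p q.2 else 0) - (if q.2 = p then B q.1 p else 0)) =
          (⁅Matrix.single p p (1 : ℂ), B⁆ : M (Q (Fin.last m)).n) q.1 q.2 := by
      intro q _
      rw [Ring.lie_def, Matrix.sub_apply]
      congr 1
      · by_cases h1 : q.1 = p
        · subst h1
          rw [if_pos rfl, Matrix.single_mul_apply_same, one_mul]
        · rw [if_neg h1, Matrix.single_mul_apply_of_ne _ _ _ _ _ h1]
      · by_cases h2 : q.2 = p
        · subst h2
          rw [if_pos rfl, Matrix.mul_single_apply_same, mul_one]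
        · rw [if_neg h2, Matrix.mul_single_apply_of_ne _ _ _ _ _ h2]
    rw [Finset.sum_congr rfl hq]
    exact h
  -- pair the divergences with the cut potential
  have hzero : ∑ p : Fin (Q (Fin.last m)).n, φ p *
      (∑ q ∈ SQ (Fin.last m), ((if q.1 = p then B p q.2 else 0) -
        (if q.2 = p then B q.1 p else 0))) = 0 := by
    apply Finset.sum_eq_zero
    intro p _
    rw [hdiv p, mul_zero]
  have hswap : ∑ p : Fin (Q (Fin.last m)).n, φ p *
      (∑ q ∈ SQ (Fin.last m), ((if q.1 = p then B p q.2 else 0) -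
        (if q.2 = p then B q.1 p else 0))) =
      ∑ q ∈ SQ (Fin.last m), (φ q.1 - φ q.2) * B q.1 q.2 := by
    simp_rw [Finset.mul_sum]
    rw [Finset.sum_comm]
    apply Finset.sum_congr rfl
    intro q _
    have h1 : ∀ p : Fin (Q (Fin.last m)).n, φ p * ((if q.1 = p then B p q.2 else 0) -
        (if q.2 = p then B q.1 p else 0)) =
        (if q.1 = p then φ p * B q.1 q.2 else 0) -
        (if q.2 = p then φ p * B q.1 q.2 else 0) := by
      intro p
      rw [mul_sub]
      congr 1
      · by_cases h : q.1 = p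
        · subst h; rw [if_pos rfl, if_pos rfl]
        · rw [if_neg h, if_neg h, mul_zero]
      · by_cases h : q.2 = p
        · subst h; rw [if_pos rfl, if_pos rfl]
        · rw [if_neg h, if_neg h, mul_zero]
    rw [Finset.sum_congr rfl (fun p _ => h1 p), Finset.sum_sub_distrib,
      Finset.sum_ite_eq, Finset.sum_ite_eq]
    simp [sub_mul]
  have hsum : ∑ q ∈ SQ (Fin.last m), (φ q.1 - φ q.2) * B q.1 q.2 = 0 := by
    rw [← hswap]; exact hzero
  have hterm : ∀ q ∈ SQ (Fin.last m), (φ q.1 - φ q.2) * B q.1 q.2 =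
      (if q = e then -B e.1 e.2 else 0) := by
    intro q hq
    have hcp := hφ q hq
    by_cases h : q = e
    · subst h
      rw [if_pos rfl] at hcp ⊢
      linear_combination (-(B q.1 q.2)) * hcp
    · rw [if_neg h] at hcp ⊢
      rw [sub_eq_zero.mp hcp, sub_self, zero_mul]
  have hfinal : ∑ q ∈ SQ (Fin.last m), (φ q.1 - φ q.2) * B q.1 q.2 = -B e.1 e.2 := by
    rw [Finset.sum_congr rfl hterm, Finset.sum_ite_eq' (SQ (Fin.last m)) e fun _ => -B e.1 e.2,
      if_pos he]
  rw [hfinal] at hsum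
  have := neg_eq_zero.mp hsum
  exact this

end
end LiePosets
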